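/- Fix d ≥ 1. Let f_Y : [0,∞) → [0,∞) be defined by f_Y(y) = 2/3 for 0 ≤ y ≤ 1 and f_Y(y) = (2/3)·y^{−3} for y ≥ 1, and for a > 0 define P(a) := ∫_0^∞ f_Y(y)·( (2π)^{−d/2} ∫_{{z ∈ ℝ^d : √y·‖z‖ ≤ a}} exp(−‖z‖²/2) dz ) dy. Then there exists a constant C > 0 (depending only on d) such that for all a ∈ (0,1), P(a) ≤ C·a^{2d/(d+2)}. -/

import Mathlib

open MeasureTheory Metric ENNReal

/-- The density `f_Y(y) = 2/3` on `[0,1]` and `(2/3)·y⁻³` on `[1,∞)`. -/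
noncomputable def fY (y : ℝ) : ℝ := if y ≤ 1 then 2 / 3 else (2 / 3) * (y ^ 3)⁻¹

/-- `P(a) = ∫_0^∞ f_Y(y) · ((2π)^{-d/2} ∫_{√y‖z‖ ≤ a} e^{-‖z‖²/2} dz) dy`,
the probability that `√Y·|Z| ≤ a` for a standard `d`-dimensional Gaussian `Z`
independent of `Y`. -/
noncomputable def Pa (d : ℕ) (a : ℝ) : ℝ≥0∞ :=
  ∫⁻ y in Set.Ioi (0 : ℝ),
    ENNReal.ofReal (fY y) *
      (ENNReal.ofReal ((2 * Real.pi) ^ (-(d : ℝ) / 2)) *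
        ∫⁻ z in {z : EuclideanSpace ℝ (Fin d) | Real.sqrt y * ‖z‖ ≤ a},
          ENNReal.ofReal (Real.exp (-‖z‖ ^ 2 / 2)))

lemma fY_nonneg (y : ℝ) : 0 ≤ fY y := by
  unfold fY
  split
  · norm_num
  · rename_i hy
    have : (0:ℝ) < y := lt_trans one_pos (not_le.mp hy)
    positivity

lemma gauss_lintegral (d : ℕ) :
    ∫⁻ z : EuclideanSpace ℝ (Fin d), ENNReal.ofReal (Real.exp (-‖z‖ ^ 2 / 2))
      = ENNReal.ofReal ((2 * Real.pi) ^ ((d : ℝ) / 2)) := by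
  have hci := GaussianFourier.integrable_cexp_neg_mul_sq_norm_add
    (V := EuclideanSpace ℝ (Fin d)) (b := (1/2 : ℂ)) (by norm_num) 0 0
  have hint : Integrable (fun v : EuclideanSpace ℝ (Fin d) => Real.exp (-‖v‖ ^ 2 / 2)) := by
    refine hci.re.congr (Filter.Eventually.of_forall fun v => ?_)
    have : (-(1/2 : ℂ) * (‖v‖ : ℂ) ^ 2 + 0 * ((inner ℝ (0 : EuclideanSpace ℝ (Fin d)) v : ℝ) : ℂ))
        = ((-‖v‖ ^ 2 / 2 : ℝ) : ℂ) := by push_cast; ring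
    simp only [this, Complex.exp_ofReal_re, RCLike.re_to_complex]
  rw [← ofReal_integral_eq_lintegral_ofReal hint
    (Filter.Eventually.of_forall fun v => (Real.exp_pos _).le)]
  congr 1
  have h2 := GaussianFourier.integral_rexp_neg_mul_sq_norm (V := EuclideanSpace ℝ (Fin d))
    (b := (1/2 : ℝ)) (by norm_num)
  have : (fun v : EuclideanSpace ℝ (Fin d) => Real.exp (-‖v‖ ^ 2 / 2))
      = fun v => Real.exp (-(1/2) * ‖v‖ ^ 2) := by funext v; ring_nf
  rw [this, h2, finrank_euclideanSpace, Fintype.card_fin]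
  congr 1
  ring

theorem stmt9 (d : ℕ) (hd : 1 ≤ d) :
    ∃ C : ℝ, 0 < C ∧ ∀ a : ℝ, 0 < a → a < 1 →
      Pa d a ≤ ENNReal.ofReal (C * a ^ (2 * (d : ℝ) / ((d : ℝ) + 2))) := by
  have hd1 : (1:ℝ) ≤ (d:ℝ) := by exact_mod_cast hd
  have hd2 : (0:ℝ) < (d:ℝ) + 2 := by linarith
  set θ : ℝ := 2 / ((d:ℝ) + 2) with hθdef
  set s : ℝ := (d:ℝ) / ((d:ℝ) + 2) with hsdef
  set e : ℝ := 2 * (d:ℝ) / ((d:ℝ) + 2) with hedef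
  have hθ0 : 0 < θ := by positivity
  have hθ1 : θ ≤ 1 := by rw [hθdef, div_le_one hd2]; linarith
  have hs0 : 0 < s := by positivity
  have hs1 : s < 1 := by rw [hsdef, div_lt_one hd2]; linarith
  have hde : (d:ℝ) * θ = e := by rw [hθdef, hedef]; ring
  have hes : e / 2 = s := by rw [hedef, hsdef]; ring
  -- constants
  set B : ℝ := Real.sqrt Real.pi ^ d / Real.Gamma ((d:ℝ) / 2 + 1) with hBdef
  have hB : 0 < B := by
    apply div_pos (pow_pos (Real.sqrt_pos.mpr Real.pi_pos) d)
    apply Real.Gamma_pos_of_pos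
    positivity
  set c : ℝ := (2 * Real.pi) ^ (-(d:ℝ) / 2) * B with hcdef
  have h2pi : (0:ℝ) < 2 * Real.pi := by positivity
  have hc : 0 < c := mul_pos (Real.rpow_pos_of_pos h2pi _) hB
  -- the y-integral
  set h : ℝ → ℝ := fun y => fY y * y ^ (-s) with hhdef
  set K : ℝ≥0∞ := ∫⁻ y in Set.Ioi (0:ℝ), ENNReal.ofReal (h y) with hKdef
  have habs : ∀ y : ℝ, ENNReal.ofReal (h y) ≤ (‖h y‖₊ : ℝ≥0∞) := fun y => by
    rw [show ((‖h y‖₊ : ℝ≥0∞)) = ‖h y‖ₑ from rfl, Real.enorm_eq_ofReal_abs]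
    exact ENNReal.ofReal_le_ofReal (le_abs_self _)
  have hi1 : IntegrableOn h (Set.Ioo (0:ℝ) 1) := by
    have hbase : IntegrableOn (fun y : ℝ => (2/3) * y ^ (-s)) (Set.Ioo (0:ℝ) 1) :=
      ((intervalIntegral.integrableOn_Ioo_rpow_iff one_pos).mpr (by linarith)).const_mul _
    refine hbase.congr ?_
    filter_upwards [ae_restrict_mem measurableSet_Ioo] with y hy
    simp only [hhdef, fY, if_pos hy.2.le]
  have hi2 : IntegrableOn h (Set.Ioi (1:ℝ)) := by
    have hbase : IntegrableOn (fun y : ℝ => (2/3) * y ^ (-3 - s)) (Set.Ioi (1:ℝ)) :=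
      (integrableOn_Ioi_rpow_of_lt (by linarith) one_pos).const_mul _
    refine hbase.congr ?_
    filter_upwards [ae_restrict_mem measurableSet_Ioi] with y hy
    have hy1 : (1:ℝ) < y := hy
    have hy0 : (0:ℝ) < y := lt_trans one_pos hy1
    have hpow : y ^ (-3 - s) = (y ^ 3)⁻¹ * y ^ (-s) := by
      rw [show (-3 - s) = -3 + -s by ring, Real.rpow_add hy0, Real.rpow_neg hy0.le,
        show (3:ℝ) = ((3:ℕ):ℝ) by norm_num, Real.rpow_natCast]
    simp only [hhdef, fY, if_neg (not_le.mpr hy1), hpow]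
    ring
  have hK : K < ⊤ := by
    have hsplit : K ≤ (∫⁻ y in Set.Ioc (0:ℝ) 1, ENNReal.ofReal (h y))
        + ∫⁻ y in Set.Ioi (1:ℝ), ENNReal.ofReal (h y) := by
      rw [hKdef, ← Set.Ioc_union_Ioi_eq_Ioi (zero_le_one (α := ℝ))]
      exact lintegral_union_le _ _ _
    have e1 : (∫⁻ y in Set.Ioc (0:ℝ) 1, ENNReal.ofReal (h y))
        = ∫⁻ y in Set.Ioo (0:ℝ) 1, ENNReal.ofReal (h y) := by
      rw [Measure.restrict_congr_set Ioo_ae_eq_Ioc.symm]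
    have f1 : (∫⁻ y in Set.Ioo (0:ℝ) 1, ENNReal.ofReal (h y)) < ⊤ :=
      lt_of_le_of_lt (lintegral_mono fun y => habs y) hi1.2
    have f2 : (∫⁻ y in Set.Ioi (1:ℝ), ENNReal.ofReal (h y)) < ⊤ :=
      lt_of_le_of_lt (lintegral_mono fun y => habs y) hi2.2
    refine lt_of_le_of_lt hsplit ?_
    rw [e1]
    exact ENNReal.add_lt_top.mpr ⟨f1, f2⟩
  -- the constant
  refine ⟨c ^ θ * K.toReal + 1, by positivity, fun a ha ha1 => ?_⟩
  have hae : (0:ℝ) < a ^ e := Real.rpow_pos_of_pos ha _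
  -- pointwise bound on the Gaussian factor
  have key : ∀ y ∈ Set.Ioi (0:ℝ),
      ENNReal.ofReal (fY y) *
        (ENNReal.ofReal ((2 * Real.pi) ^ (-(d : ℝ) / 2)) *
          ∫⁻ z in {z : EuclideanSpace ℝ (Fin d) | Real.sqrt y * ‖z‖ ≤ a},
            ENNReal.ofReal (Real.exp (-‖z‖ ^ 2 / 2)))
      ≤ ENNReal.ofReal (c ^ θ * a ^ e) * ENNReal.ofReal (h y) := by
    intro y hy
    have hy0 : (0:ℝ) < y := hy
    have hsy : (0:ℝ) < Real.sqrt y := Real.sqrt_pos.mpr hy0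
    set r : ℝ := a / Real.sqrt y with hrdef
    have hr : 0 < r := div_pos ha hsy
    set Q : ℝ≥0∞ := ENNReal.ofReal ((2 * Real.pi) ^ (-(d : ℝ) / 2)) *
      ∫⁻ z in {z : EuclideanSpace ℝ (Fin d) | Real.sqrt y * ‖z‖ ≤ a},
        ENNReal.ofReal (Real.exp (-‖z‖ ^ 2 / 2)) with hQdef
    have hQ1 : Q ≤ 1 := by
      have hle : (∫⁻ z in {z : EuclideanSpace ℝ (Fin d) | Real.sqrt y * ‖z‖ ≤ a},
          ENNReal.ofReal (Real.exp (-‖z‖ ^ 2 / 2)))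
          ≤ ∫⁻ z : EuclideanSpace ℝ (Fin d), ENNReal.ofReal (Real.exp (-‖z‖ ^ 2 / 2)) :=
        setLIntegral_le_lintegral _ _
      calc Q ≤ ENNReal.ofReal ((2 * Real.pi) ^ (-(d : ℝ) / 2)) *
            ENNReal.ofReal ((2 * Real.pi) ^ ((d : ℝ) / 2)) := by
              rw [hQdef]
              exact mul_le_mul_right (le_of_le_of_eq hle (gauss_lintegral d)) _
        _ = 1 := by
              rw [← ENNReal.ofReal_mul (Real.rpow_nonneg h2pi.le _),
                ← Real.rpow_add h2pi, show -(d:ℝ)/2 + (d:ℝ)/2 = 0 by ring, Real.rpow_zero,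
                ENNReal.ofReal_one]
    have hQvol : Q ≤ ENNReal.ofReal (c * r ^ d) := by
      have hsub : {z : EuclideanSpace ℝ (Fin d) | Real.sqrt y * ‖z‖ ≤ a}
          ⊆ Metric.closedBall (0 : EuclideanSpace ℝ (Fin d)) r := by
        intro z hz
        rw [Metric.mem_closedBall, dist_zero_right]
        rw [hrdef, le_div_iff₀ hsy]
        calc ‖z‖ * Real.sqrt y = Real.sqrt y * ‖z‖ := by ring
          _ ≤ a := hz
      have hle1 : (∫⁻ z in {z : EuclideanSpace ℝ (Fin d) | Real.sqrt y * ‖z‖ ≤ a},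
          ENNReal.ofReal (Real.exp (-‖z‖ ^ 2 / 2)))
          ≤ volume (Metric.closedBall (0 : EuclideanSpace ℝ (Fin d)) r) := by
        calc (∫⁻ z in {z : EuclideanSpace ℝ (Fin d) | Real.sqrt y * ‖z‖ ≤ a},
            ENNReal.ofReal (Real.exp (-‖z‖ ^ 2 / 2)))
            ≤ ∫⁻ _z in {z : EuclideanSpace ℝ (Fin d) | Real.sqrt y * ‖z‖ ≤ a}, 1 := by
              refine lintegral_mono fun z => ?_
              rw [show (1:ℝ≥0∞) = ENNReal.ofReal 1 by simp]
              refine ENNReal.ofReal_le_ofReal ?_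
              rw [Real.exp_le_one_iff]
              nlinarith [sq_nonneg ‖z‖]
          _ = volume {z : EuclideanSpace ℝ (Fin d) | Real.sqrt y * ‖z‖ ≤ a} := by
              rw [setLIntegral_one]
          _ ≤ volume (Metric.closedBall (0 : EuclideanSpace ℝ (Fin d)) r) :=
              measure_mono hsub
      haveI : Nonempty (Fin d) := ⟨⟨0, hd⟩⟩
      have hvol : volume (Metric.closedBall (0 : EuclideanSpace ℝ (Fin d)) r)
          = ENNReal.ofReal (r ^ d) * ENNReal.ofReal B := by
        rw [EuclideanSpace.volume_closedBall, Fintype.card_fin, ofReal_pow hr.le, hBdef]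
      calc Q ≤ ENNReal.ofReal ((2 * Real.pi) ^ (-(d : ℝ) / 2)) *
            (ENNReal.ofReal (r ^ d) * ENNReal.ofReal B) := by
              rw [hQdef]
              exact mul_le_mul_right (le_of_le_of_eq hle1 hvol) _
        _ = ENNReal.ofReal (c * r ^ d) := by
              rw [← ENNReal.ofReal_mul (by positivity), ← ENNReal.ofReal_mul (by positivity),
                hcdef]
              congr 1
              ring
    have hQinterp : Q ≤ ENNReal.ofReal ((c * r ^ d) ^ θ) := by
      rcases eq_or_ne Q 0 with hQ0 | hQ0
      · rw [hQ0]; exact zero_le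
      · have hQtop : Q ≠ ⊤ := ne_top_of_le_ne_top ENNReal.one_ne_top hQ1
        have : Q = Q ^ θ * Q ^ (1 - θ) := by
          rw [← ENNReal.rpow_add _ _ hQ0 hQtop]
          norm_num
        rw [this, ← ENNReal.ofReal_rpow_of_pos (by positivity)]
        calc Q ^ θ * Q ^ (1 - θ)
            ≤ (ENNReal.ofReal (c * r ^ d)) ^ θ * 1 ^ (1 - θ) := by
              exact mul_le_mul' (ENNReal.rpow_le_rpow hQvol hθ0.le)
                (ENNReal.rpow_le_rpow hQ1 (by linarith))
          _ = (ENNReal.ofReal (c * r ^ d)) ^ θ := by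
              rw [ENNReal.one_rpow, mul_one]
    -- real computation
    have hreal : (c * r ^ d) ^ θ = (c ^ θ * a ^ e) * y ^ (-s) := by
      rw [Real.mul_rpow hc.le (by positivity), ← Real.rpow_natCast r d,
        ← Real.rpow_mul hr.le, hde, hrdef,
        Real.div_rpow ha.le (Real.sqrt_nonneg y), Real.sqrt_eq_rpow,
        ← Real.rpow_mul hy0.le]
      rw [show (1/2) * e = s by rw [← hes]; ring, div_eq_mul_inv, ← Real.rpow_neg hy0.le]
      ring
    calc ENNReal.ofReal (fY y) * Q ≤ ENNReal.ofReal (fY y) *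
          ENNReal.ofReal ((c ^ θ * a ^ e) * y ^ (-s)) := by
          rw [← hreal]
          exact mul_le_mul_right hQinterp _
      _ = ENNReal.ofReal (c ^ θ * a ^ e) * ENNReal.ofReal (h y) := by
          rw [← ENNReal.ofReal_mul (fY_nonneg y), ← ENNReal.ofReal_mul (by positivity),
            hhdef]
          congr 1
          ring
  -- assemble
  have hPa : Pa d a ≤ ENNReal.ofReal (c ^ θ * a ^ e) * K := by
    rw [Pa, hKdef, ← lintegral_const_mul' _ _ ENNReal.ofReal_ne_top]
    exact setLIntegral_mono' measurableSet_Ioi key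
  have hKe : ENNReal.ofReal (c ^ θ * a ^ e * K.toReal) = ENNReal.ofReal (c ^ θ * a ^ e) * K := by
    rw [ENNReal.ofReal_mul (by positivity), ENNReal.ofReal_toReal hK.ne]
  refine le_trans hPa ?_
  rw [← hKe]
  refine ENNReal.ofReal_le_ofReal ?_
  have hKt : 0 ≤ K.toReal := ENNReal.toReal_nonneg
  calc c ^ θ * a ^ e * K.toReal = (c ^ θ * K.toReal) * a ^ e := by ring
    _ ≤ (c ^ θ * K.toReal + 1) * a ^ e := by nlinarith
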